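/- Under the hypotheses that λ(t) ≤ η(t), H(t) ≤ 1, and K(t) = (λ(t))^{1/(1-γ)}/(η(t))^{γ/(1-γ)} + 1 > 1 for all t ∈ [0,T), with γ < 1, γ ≠ 0, λ, η > 0 continuous, the function D(t) = (1/e(t)) (λ(t)/η(t))^{1/(1-γ)} satisfies D(t) < 1 for all t ∈ [0,T). -/

import Mathlib

open Real intervalIntegral Set

theorem D_lt_one
    (T : ℝ) (hT : 0 < T)
    (gamma : ℝ) (hγ1 : gamma < 1) (hγ0 : gamma ≠ 0)
    (lam eta H : ℝ → ℝ)
    (hlam : Continuous lam) (heta : Continuous eta) (hH : Continuous H)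
    (hlampos : ∀ t, 0 < lam t) (hetapos : ∀ t, 0 < eta t)
    (hle : ∀ t, t ∈ Ico (0:ℝ) T → lam t ≤ eta t)
    (hH1 : ∀ t, t ∈ Ico (0:ℝ) T → H t ≤ 1)
    (K : ℝ → ℝ)
    (hK : ∀ t, K t = (lam t) ^ (1/(1-gamma)) / (eta t) ^ (gamma/(1-gamma)) + 1)
    (hK1 : ∀ t, t ∈ Ico (0:ℝ) T → 1 < K t)
    (e D : ℝ → ℝ)
    (he : ∀ t, e t = Real.exp (-∫ v in t..T, H v)
        + ∫ s in t..T, Real.exp (-∫ v in t..s, H v) * K s)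
    (hD : ∀ t, D t = (e t)⁻¹ * (lam t / eta t) ^ (1/(1-gamma))) :
    ∀ t ∈ Ico (0:ℝ) T, D t < 1 := by
  intro t ht
  obtain ⟨ht0, htT⟩ := ht
  have hβ : (0:ℝ) < 1/(1-gamma) := by
    have : (0:ℝ) < 1 - gamma := by linarith
    positivity
  -- K is continuous and everywhere > 1
  have hKcont : Continuous K := by
    have : K = fun s => (lam s) ^ (1/(1-gamma)) / (eta s) ^ (gamma/(1-gamma)) + 1 :=
      funext hK
    rw [this]
    exact ((hlam.rpow_const (fun x => Or.inl (hlampos x).ne')).div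
      (heta.rpow_const (fun x => Or.inl (hetapos x).ne'))
      (fun x => (Real.rpow_pos_of_pos (hetapos x) _).ne')).add continuous_const
  have hKgt1 : ∀ s, 1 < K s := by
    intro s
    have h1 : 0 < (lam s) ^ (1/(1-gamma)) / (eta s) ^ (gamma/(1-gamma)) :=
      div_pos (Real.rpow_pos_of_pos (hlampos s) _) (Real.rpow_pos_of_pos (hetapos s) _)
    rw [hK]; linarith
  -- primitive of H
  set F : ℝ → ℝ := fun s => ∫ v in t..s, H v with hF
  have hFcont : Continuous F :=
    intervalIntegral.continuous_primitive (fun a b => hH.intervalIntegrable a b) t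
  -- a.e. bound H ≤ 1 on any Icc within [t, T]
  have haeT : ∀ᵐ x : ℝ, x ≠ T := by
    rw [MeasureTheory.ae_iff]
    simpa using MeasureTheory.measure_singleton T
  have hFle : ∀ s ∈ Icc t T, F s ≤ s - t := by
    intro s hs
    have hts : t ≤ s := hs.1
    have hmono : (∫ v in t..s, H v) ≤ ∫ v in t..s, (1:ℝ) := by
      apply intervalIntegral.integral_mono_ae_restrict hts
        (hH.intervalIntegrable t s) (intervalIntegrable_const)
      filter_upwards [MeasureTheory.ae_restrict_mem measurableSet_Icc,
        MeasureTheory.ae_restrict_of_ae haeT] with x hx hxT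
      exact hH1 x ⟨le_trans ht0 hx.1, lt_of_le_of_ne (le_trans hx.2 hs.2) hxT⟩
    simpa using hmono
  -- minimum of K on [t, T]
  obtain ⟨s₀, hs₀, hmin⟩ := isCompact_Icc.exists_isMinOn
    (Set.nonempty_Icc.mpr htT.le) hKcont.continuousOn
  set c : ℝ := K s₀ with hc
  have hc1 : 1 < c := hKgt1 s₀
  -- pointwise lower bound for the integrand
  have hpt : ∀ s ∈ Icc t T, c * Real.exp (t - s) ≤ Real.exp (-F s) * K s := by
    intro s hs
    have h1 : Real.exp (t - s) ≤ Real.exp (-F s) := by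
      apply Real.exp_le_exp.mpr
      have := hFle s hs
      linarith
    have h2 : c ≤ K s := hmin hs
    calc c * Real.exp (t - s) ≤ K s * Real.exp (-F s) :=
          mul_le_mul h2 h1 (Real.exp_pos _).le (le_trans (by linarith) h2)
      _ = Real.exp (-F s) * K s := by ring
  -- compute ∫ₜᵀ exp(t - s) ds
  have hderiv : ∀ s : ℝ, HasDerivAt (fun s => -Real.exp (t - s)) (Real.exp (t - s)) s := by
    intro s
    have h1 : HasDerivAt (fun s : ℝ => t - s) (-1) s := (hasDerivAt_id s).const_sub t
    have h2 := h1.exp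
    have h3 := h2.neg
    have h4 : Real.exp (t - s) = -(Real.exp (t - s) * -1) := by ring
    rw [h4]; exact h3
  have hexpint : (∫ s in t..T, Real.exp (t - s)) = 1 - Real.exp (t - T) := by
    have := intervalIntegral.integral_eq_sub_of_hasDerivAt (f := fun s => -Real.exp (t - s))
      (fun s _ => hderiv s)
      ((Real.continuous_exp.comp (continuous_const.sub continuous_id)).intervalIntegrable t T)
    rw [this]
    simp
    ring
  -- integral lower bound
  have hgcont : Continuous fun s => Real.exp (-F s) * K s :=
    ((Real.continuous_exp.comp hFcont.neg)).mul hKcont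
  have hintlb : c * (1 - Real.exp (t - T)) ≤ ∫ s in t..T, Real.exp (-F s) * K s := by
    have h1 : (∫ s in t..T, c * Real.exp (t - s)) ≤ ∫ s in t..T, Real.exp (-F s) * K s :=
      intervalIntegral.integral_mono_on htT.le
        ((continuous_const.mul (Real.continuous_exp.comp
          (continuous_const.sub continuous_id))).intervalIntegrable t T)
        (hgcont.intervalIntegrable t T) hpt
    rwa [intervalIntegral.integral_const_mul, hexpint] at h1
  -- e t > 1
  have hexplt : Real.exp (t - T) < 1 := by
    rw [Real.exp_lt_one_iff]; linarith
  have hefirst : Real.exp (t - T) ≤ Real.exp (-F T) := by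
    apply Real.exp_le_exp.mpr
    have := hFle T ⟨htT.le, le_refl T⟩
    linarith
  have het : 1 < e t := by
    rw [he t]
    have : c * (1 - Real.exp (t - T)) > 1 * (1 - Real.exp (t - T)) := by
      apply mul_lt_mul_of_pos_right hc1
      linarith
    have hFT : Real.exp (-∫ v in t..T, H v) = Real.exp (-F T) := rfl
    rw [hFT]
    nlinarith [hintlb, hefirst]
  -- conclude
  have hx1 : (lam t / eta t) ^ (1/(1-gamma)) ≤ 1 :=
    Real.rpow_le_one (div_pos (hlampos t) (hetapos t)).le
      ((div_le_one (hetapos t)).mpr (hle t ⟨ht0, htT⟩)) hβ.le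
  have hepos : 0 < e t := by linarith
  rw [hD t]
  calc (e t)⁻¹ * (lam t / eta t) ^ (1/(1-gamma)) ≤ (e t)⁻¹ * 1 :=
        mul_le_mul_of_nonneg_left hx1 (inv_nonneg.mpr hepos.le)
    _ = (e t)⁻¹ := mul_one _
    _ < 1 := by rw [inv_lt_one_iff₀]; right; exact het
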